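/- There exists a constant C > 0 such that for all sufficiently large n and all integers i, j, w with 2n^{0.6} < i < j < n^{0.9} − 2n^{0.6}, j − i > 2n^{0.6}, and |w| < n^{0.451}, the double sum Ψ(i,j,w,n) = Σ_{m'∈ℤ} Σ_{m∈ℤ} exp( −(1/4)( m²/i + (m−m')²/(j−i) + (w−m')²/(n^{0.9}−j) − w²/n^{0.9} ) ) satisfies Ψ(i,j,w,n) ≤ C √( i (j−i) (n^{0.9} − j) / n^{0.9} ). -/

import Mathlib

open Real

lemma geo_summable {u : ℝ} (hu : 0 < u) :
    Summable (fun j : ℤ => Real.exp (-(u * |(j : ℝ)|))) := by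
  have hgeo : Summable (fun n : ℕ => Real.exp (-u) ^ n) :=
    summable_geometric_of_lt_one (Real.exp_nonneg _)
      (Real.exp_lt_one_iff.mpr (by linarith))
  apply Summable.of_nat_of_neg_add_one
  · refine hgeo.congr fun n => ?_
    rw [← Real.exp_nat_mul]
    congr 1
    push_cast
    rw [abs_of_nonneg (by positivity)]
    ring
  · refine (hgeo.mul_left (Real.exp (-u))).congr fun n => ?_
    rw [← Real.exp_nat_mul, ← Real.exp_add]
    congr 1
    push_cast
    rw [abs_of_nonpos (by push_cast; linarith [Nat.cast_nonneg (α := ℝ) n])]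
    push_cast
    ring

lemma geo_tsum_le {u : ℝ} (hu : 0 < u) (hu2 : u ≤ 1 / 2) :
    (∑' j : ℤ, Real.exp (-(u * |(j : ℝ)|))) ≤ 3 / u := by
  have hr0 : (0:ℝ) ≤ Real.exp (-u) := Real.exp_nonneg _
  have hr1 : Real.exp (-u) < 1 := Real.exp_lt_one_iff.mpr (by linarith)
  have hgeo : Summable (fun n : ℕ => Real.exp (-u) ^ n) :=
    summable_geometric_of_lt_one hr0 hr1
  have h1 : (fun n : ℕ => Real.exp (-(u * |((n : ℤ) : ℝ)|))) = fun n : ℕ => Real.exp (-u) ^ n := by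
    funext n
    rw [← Real.exp_nat_mul]
    congr 1
    push_cast
    rw [abs_of_nonneg (by positivity)]
    ring
  have h2 : (fun n : ℕ => Real.exp (-(u * |((-(n+1) : ℤ) : ℝ)|)))
      = fun n : ℕ => Real.exp (-u) * Real.exp (-u) ^ n := by
    funext n
    rw [← Real.exp_nat_mul, ← Real.exp_add]
    congr 1
    push_cast
    rw [abs_of_nonpos (by push_cast; linarith [Nat.cast_nonneg (α := ℝ) n])]
    push_cast
    ring
  rw [tsum_of_nat_of_neg_add_one (by rw [h1]; exact hgeo)
    (by rw [h2]; exact hgeo.mul_left _)]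
  rw [h1, h2, tsum_mul_left, tsum_geometric_of_lt_one hr0 hr1]
  -- bound : (1 + exp(-u)) * (1 - exp(-u))⁻¹ ≤ 3/u
  have hden : 0 < 1 - Real.exp (-u) := by linarith
  have hexp : Real.exp (-u) ≤ (1 + u)⁻¹ := by
    have h := Real.add_one_le_exp u
    rw [Real.exp_neg]
    exact inv_anti₀ (by linarith) (by linarith)
  have hden2 : 2 * u / 3 ≤ 1 - Real.exp (-u) := by
    have h1u : (0:ℝ) < 1 + u := by linarith
    have : 1 - (1 + u)⁻¹ = u / (1 + u) := by field_simp; ring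
    have h3 : u / (1 + u) ≥ 2 * u / 3 := by
      rw [ge_iff_le, div_le_div_iff₀ (by norm_num) h1u]
      nlinarith
    linarith
  calc (1 - Real.exp (-u))⁻¹ + Real.exp (-u) * (1 - Real.exp (-u))⁻¹
      ≤ (1 - Real.exp (-u))⁻¹ + 1 * (1 - Real.exp (-u))⁻¹ := by
        gcongr
    _ = 2 * (1 - Real.exp (-u))⁻¹ := by ring
    _ ≤ 2 * (2 * u / 3)⁻¹ := by
        gcongr
    _ = 3 / u := by field_simp
  done


lemma geo_summable_shift {u : ℝ} (hu : 0 < u) (k : ℤ) :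
    Summable (fun m : ℤ => Real.exp (-(u * |((m - k : ℤ) : ℝ)|))) :=
  ((Equiv.subRight k).summable_iff
    (f := fun j : ℤ => Real.exp (-(u * |(j : ℝ)|)))).mpr (geo_summable hu)

lemma geo_tsum_shift {u : ℝ} (k : ℤ) :
    (∑' m : ℤ, Real.exp (-(u * |((m - k : ℤ) : ℝ)|)))
      = ∑' j : ℤ, Real.exp (-(u * |(j : ℝ)|)) :=
  (Equiv.subRight k).tsum_eq (fun j : ℤ => Real.exp (-(u * |(j : ℝ)|)))

lemma gauss_pointwise {s : ℝ} (hs : 1 ≤ s) (x : ℝ) (m : ℤ) :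
    Real.exp (-(((m : ℝ) - x) ^ 2 / (4 * s)))
      ≤ Real.exp (3/4) * Real.exp (-((1 / (2 * Real.sqrt s)) * |((m - ⌊x⌋ : ℤ) : ℝ)|)) := by
  have hq1 : 1 ≤ Real.sqrt s := by
    rw [show (1:ℝ) = Real.sqrt 1 by simp]
    exact Real.sqrt_le_sqrt hs
  set q := Real.sqrt s with hq
  have hq2 : q ^ 2 = s := Real.sq_sqrt (by linarith)
  rw [← Real.exp_add, Real.exp_le_exp]
  have hB : |((m - ⌊x⌋ : ℤ) : ℝ)| ≤ |(m : ℝ) - x| + 1 := by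
    push_cast
    have h1 : |x - (⌊x⌋ : ℝ)| ≤ 1 := by
      rw [abs_of_nonneg (by linarith [Int.floor_le x])]
      linarith [Int.lt_floor_add_one x]
    calc |(m:ℝ) - (⌊x⌋ : ℝ)| = |((m:ℝ) - x) + (x - (⌊x⌋ : ℝ))| := by ring_nf
      _ ≤ |(m:ℝ) - x| + |x - (⌊x⌋ : ℝ)| := abs_add_le _ _
      _ ≤ |(m:ℝ) - x| + 1 := by linarith
  set A := |(m:ℝ) - x| with hA'
  set B := |((m - ⌊x⌋ : ℤ) : ℝ)| with hB'
  have hA : 0 ≤ A := abs_nonneg _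
  have hAsq : ((m : ℝ) - x)^2 = A^2 := (sq_abs _).symm
  have key : 2 * q * B ≤ 3 * q ^ 2 + A ^ 2 := by nlinarith [sq_nonneg (A - q), abs_nonneg ((m:ℝ) - x)]
  have hqpos : (0:ℝ) < q := by linarith
  have heq : 3/4 + -((1/(2*q)) * B) - -(A^2/(4*s)) = (3*q^2 + A^2 - 2*q*B) / (4*q^2) := by
    rw [← hq2]; field_simp; ring
  rw [hAsq]
  have hnn : (0:ℝ) ≤ (3*q^2 + A^2 - 2*q*B) / (4*q^2) :=
    div_nonneg (by linarith) (by positivity)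
  linarith

lemma gauss_summable {s : ℝ} (hs : 1 ≤ s) (x : ℝ) :
    Summable (fun m : ℤ => Real.exp (-(((m : ℝ) - x) ^ 2 / (4 * s)))) := by
  have hq1 : 1 ≤ Real.sqrt s := by
    rw [show (1:ℝ) = Real.sqrt 1 by simp]
    exact Real.sqrt_le_sqrt hs
  have hu : (0:ℝ) < 1 / (2 * Real.sqrt s) := by positivity
  have hshift : Summable (fun m : ℤ =>
      Real.exp (-((1 / (2 * Real.sqrt s)) * |((m - ⌊x⌋ : ℤ) : ℝ)|))) := by
    exact geo_summable_shift hu _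
  exact Summable.of_nonneg_of_le (fun m => Real.exp_nonneg _)
    (fun m => gauss_pointwise hs x m) (hshift.mul_left _)

lemma gauss_tsum_le {s : ℝ} (hs : 1 ≤ s) (x : ℝ) :
    (∑' m : ℤ, Real.exp (-(((m : ℝ) - x) ^ 2 / (4 * s)))) ≤ 18 * Real.sqrt s := by
  have hq1 : 1 ≤ Real.sqrt s := by
    rw [show (1:ℝ) = Real.sqrt 1 by simp]
    exact Real.sqrt_le_sqrt hs
  set q := Real.sqrt s with hq
  have hqpos : (0:ℝ) < q := by linarith
  have hu : (0:ℝ) < 1 / (2 * q) := by positivity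
  have hu2 : 1 / (2 * q) ≤ 1 / 2 := by
    rw [div_le_div_iff₀ (by positivity) (by norm_num)]
    linarith
  have hshift : Summable (fun m : ℤ =>
      Real.exp (-((1 / (2 * q)) * |((m - ⌊x⌋ : ℤ) : ℝ)|))) :=
    geo_summable_shift hu _
  have hexp3 : Real.exp (3/4) ≤ 3 := by
    calc Real.exp (3/4) ≤ Real.exp 1 := Real.exp_le_exp.mpr (by norm_num)
      _ ≤ 2.7182818286 := Real.exp_one_lt_d9.le
      _ ≤ 3 := by norm_num
  calc (∑' m : ℤ, Real.exp (-(((m : ℝ) - x) ^ 2 / (4 * s))))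
      ≤ ∑' m : ℤ, Real.exp (3/4) * Real.exp (-((1 / (2 * q)) * |((m - ⌊x⌋ : ℤ) : ℝ)|)) :=
        Summable.tsum_le_tsum (fun m => gauss_pointwise hs x m) (gauss_summable hs x) (hshift.mul_left _)
    _ = Real.exp (3/4) * ∑' m : ℤ, Real.exp (-((1 / (2 * q)) * |((m - ⌊x⌋ : ℤ) : ℝ)|)) :=
        tsum_mul_left
    _ = Real.exp (3/4) * ∑' j : ℤ, Real.exp (-((1 / (2 * q)) * |(j : ℝ)|)) := by
        rw [geo_tsum_shift]
    _ ≤ 3 * (3 / (1 / (2 * q))) := by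
        apply mul_le_mul hexp3 (geo_tsum_le hu hu2) (tsum_nonneg fun j => Real.exp_nonneg _)
          (by norm_num)
    _ = 18 * q := by field_simp; ring

lemma sq_complete {a b c : ℝ} (ha : 0 < a) (hb : 0 < b) (hc : 0 < c) (m m' w : ℝ) :
    -(1/4) * (m^2/a + (m-m')^2/b + (w-m')^2/c - w^2/(a+b+c))
      = -((m' - (a+b)*w/(a+b+c))^2 / (4*((a+b)*c/(a+b+c))))
        + -((m - a*m'/(a+b))^2 / (4*(a*b/(a+b)))) := by
  have hab : (0:ℝ) < a + b := by linarith
  have habc : (0:ℝ) < a + b + c := by linarith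
  field_simp
  ring


theorem gaussian_double_sum_bound :
    ∃ C : ℝ, 0 < C ∧ ∃ N : ℕ, ∀ n : ℕ, N ≤ n → ∀ i j : ℕ, ∀ w : ℤ,
      2 * (n : ℝ) ^ (0.6 : ℝ) < (i : ℝ) → i < j →
      (j : ℝ) < (n : ℝ) ^ (0.9 : ℝ) - 2 * (n : ℝ) ^ (0.6 : ℝ) →
      2 * (n : ℝ) ^ (0.6 : ℝ) < (j : ℝ) - (i : ℝ) →
      |(w : ℝ)| < (n : ℝ) ^ (0.451 : ℝ) →
      (∑' m' : ℤ, ∑' m : ℤ, Real.exp (-(1 / 4) *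
          ((m : ℝ) ^ 2 / (i : ℝ) + ((m : ℝ) - (m' : ℝ)) ^ 2 / ((j : ℝ) - (i : ℝ))
            + ((w : ℝ) - (m' : ℝ)) ^ 2 / ((n : ℝ) ^ (0.9 : ℝ) - (j : ℝ))
            - (w : ℝ) ^ 2 / (n : ℝ) ^ (0.9 : ℝ))))
        ≤ C * Real.sqrt ((i : ℝ) * ((j : ℝ) - (i : ℝ))
            * ((n : ℝ) ^ (0.9 : ℝ) - (j : ℝ)) / (n : ℝ) ^ (0.9 : ℝ)) := by
  refine ⟨324, by norm_num, 1, ?_⟩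
  intro n hn i j w h1 hij h2 h3 _
  have hn1 : (1:ℝ) ≤ (n:ℝ) := by exact_mod_cast hn
  have h06 : (1:ℝ) ≤ (n:ℝ) ^ (0.6:ℝ) := Real.one_le_rpow hn1 (by norm_num)
  set a : ℝ := (i:ℝ) with hadef
  set b : ℝ := (j:ℝ) - a with hbdef
  set c : ℝ := (n:ℝ) ^ (0.9:ℝ) - (j:ℝ) with hcdef
  have hTeq : (n:ℝ) ^ (0.9:ℝ) = a + b + c := by rw [hbdef, hcdef, hadef]; ring
  clear_value a b c
  rw [hTeq]
  have ha : (2:ℝ) < a := by linarith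
  have hb : (2:ℝ) < b := by linarith
  have h2t : (2:ℝ) ≤ 2 * (n:ℝ) ^ (0.6:ℝ) := by linarith
  have hc : (2:ℝ) < c := by
    have h' : 2 * (n:ℝ) ^ (0.6:ℝ) < c := by rw [hcdef]; linarith
    linarith
  have ha0 : (0:ℝ) < a := by linarith
  have hb0 : (0:ℝ) < b := by linarith
  have hc0 : (0:ℝ) < c := by linarith
  have hab0 : (0:ℝ) < a + b := by linarith
  have habc0 : (0:ℝ) < a + b + c := by linarith
  have hs1 : (1:ℝ) ≤ a * b / (a + b) := by
    rw [le_div_iff₀ hab0]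
    nlinarith
  have hs2 : (1:ℝ) ≤ (a + b) * c / (a + b + c) := by
    rw [le_div_iff₀ habc0]
    nlinarith
  have key : ∀ m' : ℤ,
      (∑' m : ℤ, Real.exp (-(1 / 4) *
          ((m : ℝ) ^ 2 / a + ((m : ℝ) - (m' : ℝ)) ^ 2 / b
            + ((w : ℝ) - (m' : ℝ)) ^ 2 / c - (w : ℝ) ^ 2 / (a + b + c))))
      = Real.exp (-(((m' : ℝ) - (a + b) * (w : ℝ) / (a + b + c)) ^ 2
            / (4 * ((a + b) * c / (a + b + c)))))
        * ∑' m : ℤ, Real.exp (-(((m : ℝ) - a * (m' : ℝ) / (a + b)) ^ 2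
            / (4 * (a * b / (a + b))))) := by
    intro m'
    rw [← tsum_mul_left]
    congr 1
    funext m
    rw [show -(1 / 4) * ((m : ℝ) ^ 2 / a + ((m : ℝ) - (m' : ℝ)) ^ 2 / b
            + ((w : ℝ) - (m' : ℝ)) ^ 2 / c - (w : ℝ) ^ 2 / (a + b + c))
        = -((1:ℝ)/4) * ((m : ℝ) ^ 2 / a + ((m : ℝ) - (m' : ℝ)) ^ 2 / b
            + ((w : ℝ) - (m' : ℝ)) ^ 2 / c - (w : ℝ) ^ 2 / (a + b + c)) from by norm_num,
      sq_complete ha0 hb0 hc0 (m : ℝ) (m' : ℝ) (w : ℝ), Real.exp_add]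
  have hG : ∀ m' : ℤ,
      (∑' m : ℤ, Real.exp (-(1 / 4) *
          ((m : ℝ) ^ 2 / a + ((m : ℝ) - (m' : ℝ)) ^ 2 / b
            + ((w : ℝ) - (m' : ℝ)) ^ 2 / c - (w : ℝ) ^ 2 / (a + b + c))))
      ≤ Real.exp (-(((m' : ℝ) - (a + b) * (w : ℝ) / (a + b + c)) ^ 2
            / (4 * ((a + b) * c / (a + b + c))))) * (18 * Real.sqrt (a * b / (a + b))) := by
    intro m'
    rw [key m']
    exact mul_le_mul_of_nonneg_left (gauss_tsum_le hs1 _) (Real.exp_nonneg _)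
  have hgsum : Summable (fun m' : ℤ =>
      Real.exp (-(((m' : ℝ) - (a + b) * (w : ℝ) / (a + b + c)) ^ 2
            / (4 * ((a + b) * c / (a + b + c))))) * (18 * Real.sqrt (a * b / (a + b)))) :=
    (gauss_summable hs2 _).mul_right _
  have hfinal : (∑' m' : ℤ,
      Real.exp (-(((m' : ℝ) - (a + b) * (w : ℝ) / (a + b + c)) ^ 2
            / (4 * ((a + b) * c / (a + b + c))))) * (18 * Real.sqrt (a * b / (a + b))))
      ≤ 324 * Real.sqrt (a * b * c / (a + b + c)) := by
    rw [tsum_mul_right]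
    have h2' := gauss_tsum_le hs2 ((a + b) * (w : ℝ) / (a + b + c))
    have hsqrt : Real.sqrt ((a + b) * c / (a + b + c)) * Real.sqrt (a * b / (a + b))
        = Real.sqrt (a * b * c / (a + b + c)) := by
      rw [← Real.sqrt_mul (by positivity)]
      congr 1
      field_simp
    calc (∑' m' : ℤ, Real.exp (-(((m' : ℝ) - (a + b) * (w : ℝ) / (a + b + c)) ^ 2
            / (4 * ((a + b) * c / (a + b + c)))))) * (18 * Real.sqrt (a * b / (a + b)))
        ≤ (18 * Real.sqrt ((a + b) * c / (a + b + c))) * (18 * Real.sqrt (a * b / (a + b))) := by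
          apply mul_le_mul_of_nonneg_right h2' (by positivity)
      _ = 324 * (Real.sqrt ((a + b) * c / (a + b + c)) * Real.sqrt (a * b / (a + b))) := by ring
      _ = 324 * Real.sqrt (a * b * c / (a + b + c)) := by rw [hsqrt]
  by_cases hf : Summable (fun m' : ℤ =>
      (∑' m : ℤ, Real.exp (-(1 / 4) *
          ((m : ℝ) ^ 2 / a + ((m : ℝ) - (m' : ℝ)) ^ 2 / b
            + ((w : ℝ) - (m' : ℝ)) ^ 2 / c - (w : ℝ) ^ 2 / (a + b + c)))))
  · exact le_trans (Summable.tsum_le_tsum hG hf hgsum) hfinal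
  · rw [tsum_eq_zero_of_not_summable hf]
    positivity
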